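/- Let λ > 0, μ > 0, c > 0, and define p_h(x) = (λμ/(2πc)) ∫_{‖x‖/c}^∞ e^{-(λ+μ)τ} exp((λ/c)√(c²τ² - ‖x‖²)) / √(c²τ² - ‖x‖²) dτ for x ∈ ℝ². Then ∫_{ℝ²} p_h(x) dx = λ/(λ+μ). -/

import Mathlib

open MeasureTheory Real Set

noncomputable def hS5 (lam mu c r τ : ℝ) : ℝ :=
  Real.exp (-(lam + mu) * τ) *
    (Real.exp ((lam / c) * Real.sqrt (c ^ 2 * τ ^ 2 - r ^ 2)) /
      Real.sqrt (c ^ 2 * τ ^ 2 - r ^ 2))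

lemma hS5_nonneg (lam mu c r τ : ℝ) : 0 ≤ hS5 lam mu c r τ := by
  unfold hS5; positivity

lemma measurable_hS5 (lam mu c : ℝ) :
    Measurable (fun p : ℝ × ℝ => hS5 lam mu c p.1 p.2) := by
  unfold hS5
  apply Measurable.mul
  · fun_prop
  · apply Measurable.div <;> fun_prop

lemma phi_mem {b : ℝ} (u : ℝ) (hu : u ∈ Ioo 0 b) : Real.sqrt (b^2 - u^2) ∈ Ioo 0 b := by
  obtain ⟨h0, h1⟩ := hu
  have hb : 0 < b := lt_trans h0 h1
  constructor
  · exact Real.sqrt_pos.2 (by nlinarith)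
  · exact (Real.sqrt_lt' hb).2 (by nlinarith)

lemma phi_phi {b u : ℝ} (hu : u ∈ Ioo 0 b) :
    Real.sqrt (b^2 - (Real.sqrt (b^2-u^2))^2) = u := by
  obtain ⟨h0, h1⟩ := hu
  rw [Real.sq_sqrt (by nlinarith)]
  rw [show b^2 - (b^2 - u^2) = u^2 by ring, Real.sqrt_sq h0.le]

lemma phi_image {b : ℝ} : (fun u => Real.sqrt (b^2-u^2)) '' Ioo 0 b = Ioo 0 b := by
  apply Subset.antisymm
  · rintro r ⟨u, hu, rfl⟩; exact phi_mem u hu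
  · intro r hr; exact ⟨_, phi_mem r hr, phi_phi hr⟩

lemma phi_inj {b : ℝ} : InjOn (fun u => Real.sqrt (b^2-u^2)) (Ioo 0 b) := by
  intro u hu v hv hh
  have h2 : Real.sqrt (b^2 - (Real.sqrt (b^2-u^2))^2)
      = Real.sqrt (b^2 - (Real.sqrt (b^2-v^2))^2) := by
    simp only at hh; rw [hh]
  rwa [phi_phi hu, phi_phi hv] at h2

lemma phi_deriv {b u : ℝ} (hu : u ∈ Ioo 0 b) :
    HasDerivWithinAt (fun u => Real.sqrt (b^2-u^2)) (-u / Real.sqrt (b^2-u^2)) (Ioo 0 b) u := by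
  obtain ⟨h0, h1⟩ := hu
  have hpos : 0 < b^2 - u^2 := by nlinarith
  have h1' : HasDerivAt (fun u : ℝ => b^2 - u^2) (-(2*u)) u := by
    simpa using (hasDerivAt_pow 2 u).const_sub (b^2)
  have h2 := (Real.hasDerivAt_sqrt hpos.ne').comp u h1'
  have hs : Real.sqrt (b^2 - u^2) ≠ 0 := (Real.sqrt_pos.2 hpos).ne'
  refine HasDerivWithinAt.congr_deriv h2.hasDerivWithinAt ?_
  field_simp

lemma integral_exp_mul_S5 {k a b : ℝ} (hk : k ≠ 0) :
    ∫ u in a..b, Real.exp (k*u) = (Real.exp (k*b) - Real.exp (k*a))/k := by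
  have hd : ∀ u ∈ Set.uIcc a b, HasDerivAt (fun u => Real.exp (k*u)/k) (Real.exp (k*u)) u := by
    intro u _
    have h1 : HasDerivAt (fun u : ℝ => k*u) k u := by simpa using (hasDerivAt_id u).const_mul k
    have h3 := ((Real.hasDerivAt_exp (k*u)).comp u h1).div_const k
    refine HasDerivAt.congr_deriv h3 ?_
    field_simp
  rw [intervalIntegral.integral_eq_sub_of_hasDerivAt hd
    ((Real.continuous_exp.comp (continuous_const.mul continuous_id)).intervalIntegrable a b)]
  ring

lemma inner_lemma_S5 {lam mu c : ℝ} (hlam : 0 < lam) (hc : 0 < c) {τ : ℝ} (hτ : 0 < τ) :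
    IntegrableOn (fun r => r * hS5 lam mu c r τ) (Ioo 0 (c*τ)) volume ∧
    ∫ r in Ioo 0 (c*τ), r * hS5 lam mu c r τ =
      Real.exp (-(lam+mu)*τ) * ((Real.exp (lam*τ) - 1) * (c/lam)) := by
  set b := c*τ with hbdef
  have hb : 0 < b := mul_pos hc hτ
  have hb2 : c^2*τ^2 = b^2 := by rw [hbdef]; ring
  set g : ℝ → ℝ := fun r => r * hS5 lam mu c r τ with hg
  have hgr : ∀ r, g r = r * (Real.exp (-(lam+mu)*τ) *
      (Real.exp ((lam/c) * Real.sqrt (b^2 - r^2)) / Real.sqrt (b^2 - r^2))) := by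
    intro r; rw [hg]; unfold hS5; rw [hb2]
  have hder : ∀ u ∈ Ioo (0:ℝ) b, HasDerivWithinAt (fun u => Real.sqrt (b^2-u^2))
      (-u / Real.sqrt (b^2-u^2)) (Ioo 0 b) u := fun u hu => phi_deriv hu
  have hpt : ∀ u ∈ Ioo (0:ℝ) b,
      |(-u / Real.sqrt (b^2-u^2))| • g (Real.sqrt (b^2-u^2)) =
        Real.exp (-(lam+mu)*τ) * Real.exp ((lam/c)*u) := by
    intro u hu
    obtain ⟨h0, h1⟩ := hu
    have hpos : 0 < b^2 - u^2 := by nlinarith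
    have hsp : 0 < Real.sqrt (b^2-u^2) := Real.sqrt_pos.2 hpos
    rw [hgr, phi_phi ⟨h0,h1⟩, abs_div, abs_neg, abs_of_pos h0,
      abs_of_nonneg (Real.sqrt_nonneg _), smul_eq_mul]
    field_simp
  have key := integral_image_eq_integral_abs_deriv_smul measurableSet_Ioo hder phi_inj g
  rw [phi_image] at key
  have keyInt := integrableOn_image_iff_integrableOn_abs_deriv_smul measurableSet_Ioo hder phi_inj g
  rw [phi_image] at keyInt
  have hcont : Continuous (fun u : ℝ => Real.exp (-(lam+mu)*τ) * Real.exp ((lam/c)*u)) := by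
    continuity
  have hk : lam/c ≠ 0 := by positivity
  have hkb : (lam/c)*b = lam*τ := by rw [hbdef]; field_simp
  constructor
  · rw [keyInt]
    exact (hcont.integrableOn_Ioc.mono_set Ioo_subset_Ioc_self).congr_fun
      (fun u hu => (hpt u hu).symm) measurableSet_Ioo
  · rw [key, setIntegral_congr_fun measurableSet_Ioo hpt, MeasureTheory.integral_const_mul,
      ← integral_Ioc_eq_integral_Ioo, ← intervalIntegral.integral_of_le hb.le,
      integral_exp_mul_S5 hk, hkb]
    rw [mul_zero, Real.exp_zero]
    field_simp

lemma integral_exp_neg_mul_Ioi_S5 {b : ℝ} (hb : 0 < b) :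
    ∫ τ in Ioi (0:ℝ), Real.exp (-b*τ) = 1/b := by
  have hd : ∀ x ∈ Ioi (0:ℝ), HasDerivAt (fun τ => -Real.exp (-b*τ)/b) (Real.exp (-b*x)) x := by
    intro x _
    have h1 : HasDerivAt (fun τ : ℝ => -b*τ) (-b) x := by
      simpa using (hasDerivAt_id x).const_mul (-b)
    have h3 := (((Real.hasDerivAt_exp (-b*x)).comp x h1).div_const b).neg
    have h4 : (fun τ => -Real.exp (-b*τ)/b) = -fun x => (Real.exp ∘ HMul.hMul (-b)) x / b := by
      ext τ; simp [Function.comp, neg_div]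
    rw [h4]
    refine HasDerivAt.congr_deriv h3 ?_
    · rw [mul_neg, neg_div, neg_neg, mul_div_assoc, div_self hb.ne', mul_one]
  have hcont : ContinuousWithinAt (fun τ : ℝ => -Real.exp (-b*τ)/b) (Ici 0) 0 := by
    apply Continuous.continuousWithinAt; fun_prop
  have htend : Filter.Tendsto (fun τ : ℝ => -Real.exp (-b*τ)/b) Filter.atTop (nhds 0) := by
    have : Filter.Tendsto (fun τ : ℝ => Real.exp (-b*τ)) Filter.atTop (nhds 0) := by
      simpa using Real.tendsto_exp_comp_nhds_zero.2
        (Filter.Tendsto.const_mul_atTop_of_neg (neg_neg_iff_pos.2 hb) Filter.tendsto_id)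
    simpa using (this.neg).div_const b
  have := MeasureTheory.integral_Ioi_of_hasDerivAt_of_tendsto hcont hd
    (exp_neg_integrableOn_Ioi 0 hb) htend
  rw [this]
  rw [mul_zero, Real.exp_zero, zero_sub, neg_div, neg_neg, one_div]

lemma tau_lemma_S5 {lam mu c : ℝ} (hlam : 0 < lam) (hmu : 0 < mu) (hc : 0 < c) :
    IntegrableOn (fun τ => Real.exp (-(lam+mu)*τ) * ((Real.exp (lam*τ) - 1) * (c/lam)))
      (Ioi (0:ℝ)) volume ∧
    ∫ τ in Ioi (0:ℝ), Real.exp (-(lam+mu)*τ) * ((Real.exp (lam*τ) - 1) * (c/lam)) =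
      c / (mu * (lam+mu)) := by
  have ha : 0 < lam + mu := by linarith
  have heq : ∀ τ : ℝ, Real.exp (-(lam+mu)*τ) * ((Real.exp (lam*τ) - 1) * (c/lam)) =
      (c/lam) * (Real.exp (-mu*τ) - Real.exp (-(lam+mu)*τ)) := by
    intro τ
    rw [show -mu*τ = -(lam+mu)*τ + lam*τ by ring, Real.exp_add]
    ring
  have hint : IntegrableOn (fun τ => (c/lam) * (Real.exp (-mu*τ) - Real.exp (-(lam+mu)*τ)))
      (Ioi (0:ℝ)) volume :=
    (((exp_neg_integrableOn_Ioi 0 hmu).sub (exp_neg_integrableOn_Ioi 0 ha)).const_mul _)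
  constructor
  · exact hint.congr_fun (fun τ _ => (heq τ).symm) measurableSet_Ioi
  · rw [setIntegral_congr_fun measurableSet_Ioi (fun τ _ => heq τ),
      MeasureTheory.integral_const_mul,
      integral_sub (exp_neg_integrableOn_Ioi 0 hmu) (exp_neg_integrableOn_Ioi 0 ha),
      integral_exp_neg_mul_Ioi_S5 hmu, integral_exp_neg_mul_Ioi_S5 ha]
    field_simp
    ring

open ENNReal in
lemma swap_lemma_S5 {lam mu c : ℝ} (hc : 0 < c) :
    ∫⁻ r in Ioi (0:ℝ), ∫⁻ τ in Ioi (r/c), ENNReal.ofReal (r * hS5 lam mu c r τ) =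
    ∫⁻ τ in Ioi (0:ℝ), ∫⁻ r in Ioo 0 (c*τ), ENNReal.ofReal (r * hS5 lam mu c r τ) := by
  set S : Set (ℝ × ℝ) := {p : ℝ × ℝ | 0 < p.1 ∧ p.1 / c < p.2} with hSdef
  set F : ℝ × ℝ → ℝ≥0∞ :=
    S.indicator (fun p => ENNReal.ofReal (p.1 * hS5 lam mu c p.1 p.2)) with hFdef
  have hS : MeasurableSet S := by
    have : S = {p : ℝ × ℝ | 0 < p.1} ∩ {p : ℝ × ℝ | p.1 / c < p.2} := by
      ext p; simp [hSdef, Set.mem_setOf_eq]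
    rw [this]
    exact (measurableSet_lt measurable_const measurable_fst).inter
      (measurableSet_lt (measurable_fst.div_const c) measurable_snd)
  have hFmeas : Measurable F :=
    Measurable.indicator ((measurable_fst.mul (measurable_hS5 lam mu c)).ennreal_ofReal) hS
  have h1 : ∀ r : ℝ, ∫⁻ τ, F (r, τ) =
      (Ioi (0:ℝ)).indicator
        (fun r => ∫⁻ τ in Ioi (r/c), ENNReal.ofReal (r * hS5 lam mu c r τ)) r := by
    intro r
    by_cases hr : r ∈ Ioi (0:ℝ)
    · rw [indicator_of_mem hr, ← lintegral_indicator measurableSet_Ioi]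
      congr 1
      funext τ
      by_cases ht : τ ∈ Ioi (r/c)
      · rw [indicator_of_mem ht, hFdef, indicator_of_mem (show (r,τ) ∈ S from ⟨hr, ht⟩)]
      · rw [indicator_of_notMem ht, hFdef,
          indicator_of_notMem (show (r,τ) ∉ S from fun h => ht h.2)]
    · rw [indicator_of_notMem hr]
      have : ∀ τ : ℝ, F (r, τ) = 0 := by
        intro τ
        rw [hFdef, indicator_of_notMem (show (r,τ) ∉ S from fun h => hr h.1)]
      simp [this]
  have h2 : ∀ τ : ℝ, ∫⁻ r, F (r, τ) =
      (Ioi (0:ℝ)).indicator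
        (fun τ => ∫⁻ r in Ioo 0 (c*τ), ENNReal.ofReal (r * hS5 lam mu c r τ)) τ := by
    intro τ
    by_cases ht : τ ∈ Ioi (0:ℝ)
    · rw [indicator_of_mem ht, ← lintegral_indicator measurableSet_Ioo]
      congr 1
      funext r
      by_cases hr : r ∈ Ioo (0:ℝ) (c*τ)
      · have hmem : (r,τ) ∈ S := by
          refine ⟨hr.1, ?_⟩
          rw [div_lt_iff₀ hc]
          calc r < c*τ := hr.2
          _ = τ*c := mul_comm c τ
        rw [indicator_of_mem hr, hFdef, indicator_of_mem hmem]
      · have hmem : (r,τ) ∉ S := by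
          intro h
          obtain ⟨ha', hb'⟩ := h
          rw [div_lt_iff₀ hc] at hb'
          exact hr ⟨ha', by rw [mul_comm]; exact hb'⟩
        rw [indicator_of_notMem hr, hFdef, indicator_of_notMem hmem]
    · rw [indicator_of_notMem ht]
      have : ∀ r : ℝ, F (r, τ) = 0 := by
        intro r
        refine indicator_of_notMem (fun h => ht ?_) _
        exact lt_trans (div_pos h.1 hc) h.2
      simp [this]
  calc ∫⁻ r in Ioi (0:ℝ), ∫⁻ τ in Ioi (r/c), ENNReal.ofReal (r * hS5 lam mu c r τ)
      = ∫⁻ r, (Ioi (0:ℝ)).indicator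
          (fun r => ∫⁻ τ in Ioi (r/c), ENNReal.ofReal (r * hS5 lam mu c r τ)) r :=
        (lintegral_indicator measurableSet_Ioi _).symm
    _ = ∫⁻ r, ∫⁻ τ, F (r, τ) := by simp_rw [h1]
    _ = ∫⁻ τ, ∫⁻ r, F (r, τ) := by
        apply lintegral_lintegral_swap
        exact (hFmeas.comp measurable_id).aemeasurable
    _ = ∫⁻ τ, (Ioi (0:ℝ)).indicator
          (fun τ => ∫⁻ r in Ioo 0 (c*τ), ENNReal.ofReal (r * hS5 lam mu c r τ)) τ := by
        simp_rw [h2]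
    _ = ∫⁻ τ in Ioi (0:ℝ), ∫⁻ r in Ioo 0 (c*τ), ENNReal.ofReal (r * hS5 lam mu c r τ) :=
        lintegral_indicator measurableSet_Ioi _

set_option maxHeartbeats 1000000 in
open ENNReal in
lemma radial_S5 {lam mu c : ℝ} (hlam : 0 < lam) (hmu : 0 < mu) (hc : 0 < c) :
    ∫ r in Ioi (0:ℝ), r * ∫ τ in Ioi (r/c), hS5 lam mu c r τ = c / (mu * (lam+mu)) := by
  have ha : 0 < lam + mu := by linarith
  set G : ℝ → ℝ := fun r => ∫ τ in Ioi (r/c), hS5 lam mu c r τ with hGdef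
  set Y : ℝ → ℝ≥0∞ := fun r => ∫⁻ τ in Ioi (r/c), ENNReal.ofReal (r * hS5 lam mu c r τ)
    with hYdef
  -- value of the swapped lintegral
  have hX : ∫⁻ r in Ioi (0:ℝ), Y r = ENNReal.ofReal (c/(mu*(lam+mu))) := by
    rw [hYdef, swap_lemma_S5 hc]
    have hstep : ∀ τ ∈ Ioi (0:ℝ),
        (∫⁻ r in Ioo 0 (c*τ), ENNReal.ofReal (r * hS5 lam mu c r τ)) =
          ENNReal.ofReal (Real.exp (-(lam+mu)*τ) * ((Real.exp (lam*τ) - 1) * (c/lam))) := by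
      intro τ hτ
      obtain ⟨hint, hval⟩ := inner_lemma_S5 (mu := mu) hlam hc hτ
      rw [← hval]
      exact (MeasureTheory.ofReal_integral_eq_lintegral_ofReal hint
        ((ae_restrict_iff' measurableSet_Ioo).2 (ae_of_all _ fun r hr =>
          mul_nonneg hr.1.le (hS5_nonneg _ _ _ _ _)))).symm
    rw [setLIntegral_congr_fun measurableSet_Ioi hstep]
    obtain ⟨hti, htv⟩ := tau_lemma_S5 hlam hmu hc
    rw [← htv]
    refine (MeasureTheory.ofReal_integral_eq_lintegral_ofReal hti
      ((ae_restrict_iff' measurableSet_Ioi).2 (ae_of_all _ fun τ hτ => ?_))).symm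
    have hτ' : (0:ℝ) < τ := hτ
    have h1 : 1 ≤ Real.exp (lam*τ) := by
      rw [← Real.exp_zero]
      exact Real.exp_le_exp.2 (by positivity)
    have : 0 ≤ (Real.exp (lam*τ) - 1) * (c/lam) := by
      apply mul_nonneg (by linarith) (by positivity)
    exact mul_nonneg (Real.exp_pos _).le this
  -- measurability machinery (same set/indicator as in the swap lemma)
  set S : Set (ℝ × ℝ) := {p : ℝ × ℝ | 0 < p.1 ∧ p.1 / c < p.2} with hSdef
  have hS : MeasurableSet S := by
    have : S = {p : ℝ × ℝ | 0 < p.1} ∩ {p : ℝ × ℝ | p.1 / c < p.2} := by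
      ext p; simp [hSdef, Set.mem_setOf_eq]
    rw [this]
    exact (measurableSet_lt measurable_const measurable_fst).inter
      (measurableSet_lt (measurable_fst.div_const c) measurable_snd)
  set F : ℝ × ℝ → ℝ≥0∞ :=
    S.indicator (fun p => ENNReal.ofReal (p.1 * hS5 lam mu c p.1 p.2)) with hFdef
  have hFmeas : Measurable F :=
    Measurable.indicator ((measurable_fst.mul (measurable_hS5 lam mu c)).ennreal_ofReal) hS
  have h1 : ∀ r ∈ Ioi (0:ℝ), (∫⁻ τ, F (r, τ)) = Y r := by
    intro r hr
    show (∫⁻ τ, F (r, τ)) = ∫⁻ τ in Ioi (r/c), ENNReal.ofReal (r * hS5 lam mu c r τ)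
    rw [← lintegral_indicator measurableSet_Ioi]
    congr 1
    funext τ
    by_cases ht : τ ∈ Ioi (r/c)
    · rw [indicator_of_mem ht, hFdef, indicator_of_mem (show (r,τ) ∈ S from ⟨hr, ht⟩)]
    · rw [indicator_of_notMem ht, hFdef,
        indicator_of_notMem (show (r,τ) ∉ S from fun h => ht h.2)]
  have hWmeas : Measurable (fun r => ∫⁻ τ, F (r, τ)) := hFmeas.lintegral_prod_right'
  have hXW : ∫⁻ r in Ioi (0:ℝ), (∫⁻ τ, F (r, τ)) = ENNReal.ofReal (c/(mu*(lam+mu))) := by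
    rw [setLIntegral_congr_fun measurableSet_Ioi h1, hX]
  -- strong measurability of G
  set H : ℝ × ℝ → ℝ := {p : ℝ × ℝ | p.1 / c < p.2}.indicator
    (fun p => hS5 lam mu c p.1 p.2) with hHdef
  have hHmeas : Measurable H :=
    Measurable.indicator (measurable_hS5 lam mu c)
      (measurableSet_lt (measurable_fst.div_const c) measurable_snd)
  have hGmeas : StronglyMeasurable G := by
    have hsm := hHmeas.stronglyMeasurable.integral_prod_right' (ν := volume)
    have : G = fun r => ∫ τ, H (r, τ) := by
      funext r
      show (∫ τ in Ioi (r/c), hS5 lam mu c r τ) = ∫ τ, H (r, τ)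
      rw [← MeasureTheory.integral_indicator measurableSet_Ioi]
      congr 1
    rw [this]
    exact hsm
  have hGnonneg : ∀ r, 0 ≤ G r := fun r =>
    MeasureTheory.integral_nonneg (fun τ => hS5_nonneg _ _ _ _ _)
  -- a.e. identity  ofReal (r * G r) = Y r  on Ioi 0
  have hae : ∀ᵐ r ∂(volume.restrict (Ioi (0:ℝ))),
      ENNReal.ofReal (r * G r) = Y r := by
    have hfin : ∀ᵐ r ∂(volume.restrict (Ioi (0:ℝ))), (∫⁻ τ, F (r, τ)) < ⊤ :=
      ae_lt_top hWmeas (by rw [hXW]; exact ofReal_ne_top)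
    filter_upwards [hfin, ae_restrict_mem measurableSet_Ioi] with r hfin hr
    have hYfin : Y r ≠ ⊤ := by rw [← h1 r hr]; exact hfin.ne
    have hint : Integrable (fun τ => r * hS5 lam mu c r τ)
        (volume.restrict (Ioi (r/c))) := by
      constructor
      · exact ((measurable_const.mul
          ((measurable_hS5 lam mu c).comp
            (measurable_const.prodMk measurable_id)))).aestronglyMeasurable
      · rw [hasFiniteIntegral_iff_ofReal (ae_of_all _ fun τ =>
          mul_nonneg (le_of_lt hr) (hS5_nonneg _ _ _ _ _))]
        exact lt_top_iff_ne_top.2 hYfin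
    have := MeasureTheory.ofReal_integral_eq_lintegral_ofReal hint
      (ae_of_all _ fun τ => mul_nonneg (le_of_lt hr) (hS5_nonneg _ _ _ _ _))
    show ENNReal.ofReal (r * G r) = ∫⁻ τ in Ioi (r/c), ENNReal.ofReal (r * hS5 lam mu c r τ)
    rw [← this, MeasureTheory.integral_const_mul]
  -- put it together
  rw [MeasureTheory.integral_eq_lintegral_of_nonneg_ae
      ((ae_restrict_iff' measurableSet_Ioi).2 (ae_of_all _ fun r hr =>
        mul_nonneg (le_of_lt hr) (hGnonneg r)))
      ((measurable_id'.stronglyMeasurable.mul hGmeas).aestronglyMeasurable)]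
  rw [lintegral_congr_ae hae, hX, ENNReal.toReal_ofReal (by positivity)]

theorem stmt5 (lam mu c : ℝ) (hlam : 0 < lam) (hmu : 0 < mu) (hc : 0 < c) :
    ∫ x : EuclideanSpace ℝ (Fin 2),
        (lam * mu / (2 * π * c)) *
          ∫ τ in Ioi (‖x‖ / c),
            Real.exp (-(lam + mu) * τ) *
              (Real.exp ((lam / c) * Real.sqrt (c ^ 2 * τ ^ 2 - ‖x‖ ^ 2)) /
                Real.sqrt (c ^ 2 * τ ^ 2 - ‖x‖ ^ 2))
      = lam / (lam + mu) := by
  have key := radial_S5 (mu := mu) hlam hmu hc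
  have h0 : (∫ x : EuclideanSpace ℝ (Fin 2),
      (lam * mu / (2 * π * c)) *
        ∫ τ in Ioi (‖x‖ / c),
          Real.exp (-(lam + mu) * τ) *
            (Real.exp ((lam / c) * Real.sqrt (c ^ 2 * τ ^ 2 - ‖x‖ ^ 2)) /
              Real.sqrt (c ^ 2 * τ ^ 2 - ‖x‖ ^ 2)))
      = ∫ x : EuclideanSpace ℝ (Fin 2),
        (fun r : ℝ => (lam * mu / (2 * π * c)) * ∫ τ in Ioi (r / c), hS5 lam mu c r τ)
          ‖x‖ := rfl
  rw [h0, MeasureTheory.integral_fun_norm_addHaar volume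
    (fun r : ℝ => (lam * mu / (2 * π * c)) * ∫ τ in Ioi (r / c), hS5 lam mu c r τ)]
  have hball : (volume (Metric.ball (0 : EuclideanSpace ℝ (Fin 2)) 1)).toReal = π := by
    rw [EuclideanSpace.volume_ball]
    rw [Fintype.card_fin]
    norm_num
    rw [Real.sq_sqrt Real.pi_nonneg]
  simp only [measureReal_def, finrank_euclideanSpace, Fintype.card_fin, hball, pow_one, nsmul_eq_mul,
    smul_eq_mul, Nat.cast_ofNat]
  have hcong : ∀ y ∈ Ioi (0:ℝ), y ^ (2-1) * ((lam * mu / (2 * π * c)) *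
      ∫ τ in Ioi (y / c), hS5 lam mu c y τ) =
      (lam * mu / (2 * π * c)) * (y * ∫ τ in Ioi (y / c), hS5 lam mu c y τ) := by
    intro y _; ring
  rw [setIntegral_congr_fun measurableSet_Ioi hcong, MeasureTheory.integral_const_mul, key]
  have hπ : (π : ℝ) ≠ 0 := Real.pi_ne_zero
  field_simp
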